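/- Let J be a real m×n matrix such that JᵀJ is invertible, let g ∈ ℝⁿ be a nonzero vector, and let η > 0. Define δ* = η · (JᵀJ)⁻¹g / ‖J (JᵀJ)⁻¹ g‖₂. Then δ* is the unique maximizer: if δ ∈ ℝⁿ satisfies ‖Jδ‖₂ ≤ η and gᵀδ = gᵀδ*, then δ = δ*. -/

import Mathlib

open Matrix

/-- The Euclidean (`L2`) norm of a vector in `ℝ^k`. -/
noncomputable def euclNorm {k : ℕ} (v : Fin k → ℝ) : ℝ := Real.sqrt (∑ i, v i ^ 2)

lemma euclNorm_nonneg {k : ℕ} (v : Fin k → ℝ) : 0 ≤ euclNorm v := Real.sqrt_nonneg _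

lemma sq_euclNorm {k : ℕ} (v : Fin k → ℝ) : euclNorm v ^ 2 = v ⬝ᵥ v := by
  rw [euclNorm, Real.sq_sqrt (Finset.sum_nonneg fun i _ => sq_nonneg _)]
  simp [dotProduct, sq]

lemma euclNorm_pos {k : ℕ} {v : Fin k → ℝ} (hv : v ≠ 0) : 0 < euclNorm v := by
  rcases Function.ne_iff.mp hv with ⟨i, hi⟩
  apply Real.sqrt_pos.mpr
  have : (0:ℝ) < v i ^ 2 := lt_of_le_of_ne (sq_nonneg _) (Ne.symm (pow_ne_zero 2 hi))
  exact this.trans_le (Finset.single_le_sum (fun j _ => sq_nonneg (v j)) (Finset.mem_univ i))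

lemma mulVec_dot {p q : ℕ} (M : Matrix (Fin p) (Fin q) ℝ) (a : Fin q → ℝ) (b : Fin p → ℝ) :
    (M.mulVec a) ⬝ᵥ b = a ⬝ᵥ (Mᵀ.mulVec b) := by
  rw [dotProduct_comm, dotProduct_mulVec, ← Matrix.mulVec_transpose, dotProduct_comm]

/-- Lemma 1 (uniqueness): `δ* = η (JᵀJ)⁻¹ g / ‖J (JᵀJ)⁻¹ g‖₂` is the *unique*
maximizer of `gᵀδ` over `{δ : ‖Jδ‖₂ ≤ η}`: any feasible `δ` attaining the same
objective value equals `δ*`. -/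
theorem ppgd_step_unique {m n : ℕ} (J : Matrix (Fin m) (Fin n) ℝ)
    (hJ : IsUnit (Jᵀ * J)) (g : Fin n → ℝ) (hg : g ≠ 0) (η : ℝ) (hη : 0 < η)
    (δstar : Fin n → ℝ)
    (hδstar : δstar =
      (η / euclNorm (J.mulVec ((Jᵀ * J)⁻¹.mulVec g))) • ((Jᵀ * J)⁻¹.mulVec g)) :
    ∀ δ : Fin n → ℝ, euclNorm (J.mulVec δ) ≤ η → g ⬝ᵥ δ = g ⬝ᵥ δstar → δ = δstar := by
  intro δ hfeas hobj
  set A := Jᵀ * J with hA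
  have hdet : IsUnit A.det := (Matrix.isUnit_iff_isUnit_det A).mp hJ
  set w : Fin n → ℝ := A⁻¹.mulVec g with hw
  set u : Fin m → ℝ := J.mulVec w with hu
  -- A *ᵥ w = g
  have hAw : A.mulVec w = g := by
    rw [hw, Matrix.mulVec_mulVec, Matrix.mul_nonsing_inv A hdet, Matrix.one_mulVec]
  -- u ≠ 0
  have hune : u ≠ 0 := by
    intro h0
    apply hg
    have : Aᵀ = A := by rw [hA]; simp [Matrix.transpose_mul]
    calc g = A.mulVec w := hAw.symm
    _ = Jᵀ.mulVec (J.mulVec w) := by rw [← Matrix.mulVec_mulVec]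
    _ = 0 := by rw [← hu, h0, Matrix.mulVec_zero]
  have hnu : 0 < euclNorm u := euclNorm_pos hune
  set c : ℝ := η / euclNorm u with hc
  have hcpos : 0 < c := div_pos hη hnu
  -- g ⬝ᵥ δ = u ⬝ᵥ (J *ᵥ δ) for all δ
  have key : ∀ d : Fin n → ℝ, g ⬝ᵥ d = u ⬝ᵥ (J.mulVec d) := by
    intro d
    rw [← hAw, hA, ← Matrix.mulVec_mulVec, hu, mulVec_dot]
    rw [Matrix.transpose_transpose]
  -- u ⬝ᵥ u = euclNorm u ^ 2
  have huu : u ⬝ᵥ u = euclNorm u ^ 2 := (sq_euclNorm u).symm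
  -- J *ᵥ δstar = c • u
  have hJδs : J.mulVec δstar = c • u := by
    rw [hδstar, Matrix.mulVec_smul]
  -- objective value: u ⬝ᵥ (J *ᵥ δ) = η * euclNorm u
  have hval : u ⬝ᵥ (J.mulVec δ) = η * euclNorm u := by
    rw [← key, hobj, key, hJδs, dotProduct_smul, smul_eq_mul, huu, hc]
    field_simp
  -- set x = J *ᵥ δ, show x = c • u
  set x : Fin m → ℝ := J.mulVec δ with hx
  have hxx : x ⬝ᵥ x ≤ η ^ 2 := by
    rw [← sq_euclNorm]
    have := euclNorm_nonneg x
    nlinarith [hfeas]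
  have hyy : (x - c • u) ⬝ᵥ (x - c • u) ≤ 0 := by
    have expand : (x - c • u) ⬝ᵥ (x - c • u)
        = x ⬝ᵥ x - 2 * c * (u ⬝ᵥ x) + c ^ 2 * (u ⬝ᵥ u) := by
      simp [dotProduct_sub, sub_dotProduct, dotProduct_smul, smul_dotProduct,
        dotProduct_comm u x]
      ring
    have hux : u ⬝ᵥ x = η * euclNorm u := hval
    rw [expand, hux, huu, hc]
    have h1 : (η / euclNorm u) ^ 2 * euclNorm u ^ 2 = η ^ 2 := by
      field_simp
    have h2 : 2 * (η / euclNorm u) * (η * euclNorm u) = 2 * η ^ 2 := by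
      field_simp
    rw [h1, h2]
    linarith
  have hnn : (0:ℝ) ≤ (x - c • u) ⬝ᵥ (x - c • u) :=
    Finset.sum_nonneg fun i _ => mul_self_nonneg _
  have hzero : x - c • u = 0 :=
    dotProduct_self_eq_zero.mp (le_antisymm hyy hnn)
  have hxc : x = c • u := sub_eq_zero.mp hzero
  -- hence J *ᵥ δ = J *ᵥ δstar
  have hJeq : J.mulVec δ = J.mulVec δstar := by rw [← hx, hxc, hJδs]
  -- injectivity
  have : A.mulVec δ = A.mulVec δstar := by
    rw [hA, ← Matrix.mulVec_mulVec, ← Matrix.mulVec_mulVec, hJeq]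
  calc δ = (A⁻¹ * A).mulVec δ := by
        rw [Matrix.nonsing_inv_mul A hdet, Matrix.one_mulVec]
    _ = A⁻¹.mulVec (A.mulVec δ) := by rw [Matrix.mulVec_mulVec]
    _ = A⁻¹.mulVec (A.mulVec δstar) := by rw [this]
    _ = (A⁻¹ * A).mulVec δstar := by rw [Matrix.mulVec_mulVec]
    _ = δstar := by rw [Matrix.nonsing_inv_mul A hdet, Matrix.one_mulVec]
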